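/- Upper bound direction of the 3-approximation for periodic strings: with P, Q of length p, X = P^∞[0..n), Y = Q^∞[0..n), d = ⌊n/p⌋, r = n mod p, for every integer s one has ED(X, Y) ≤ d · ED(P, Q^{↻s}) + 2|s| + ED(P[0..r), Q[0..r)). -/

import Mathlib

/-- Costs for edit operations (formerly `Levenshtein.Cost` in Mathlib). -/
structure Levenshtein.Cost (α β δ : Type*) where
  delete : α → δ
  insert : β → δ
  substitute : α → β → δ

/-- The default unit costs (formerly `Levenshtein.defaultCost` in Mathlib). -/
def Levenshtein.defaultCost {α : Type*} [DecidableEq α] : Levenshtein.Cost α α ℕ where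
  delete _ := 1
  insert _ := 1
  substitute a b := if a = b then 0 else 1

/-- Levenshtein distance (formerly `levenshtein` in Mathlib), by its defining recursion. -/
def levenshtein {α β δ : Type*} [Zero δ] [Add δ] [Min δ] (C : Levenshtein.Cost α β δ) :
    List α → List β → δ
  | [], [] => 0
  | [], y :: ys => C.insert y + levenshtein C [] ys
  | x :: xs, [] => C.delete x + levenshtein C xs []
  | x :: xs, y :: ys =>
    min (C.delete x + levenshtein C xs (y :: ys))
      (min (C.insert y + levenshtein C (x :: xs) ys) (C.substitute x y + levenshtein C xs ys))

/-- Levenshtein edit distance between two lists (unit costs). -/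
def ED {α : Type*} [DecidableEq α] (X Y : List α) : ℕ :=
  levenshtein Levenshtein.defaultCost X Y

/-- The length-`n` prefix `P^∞[0..n)` of the infinite repetition of `P`. -/
def prefRep {α : Type*} (P : List α) (n : ℕ) : List α :=
  ((List.replicate n P).flatten).take n

/-- Cyclic rotation of `Q` by an integer `s` (taken modulo `|Q|`). -/
def rotZ {α : Type*} (Q : List α) (s : ℤ) : List α :=
  Q.rotate (s % (Q.length : ℤ)).toNat

section AlignedDef

variable {α : Type*}

/-- An edit script (alignment) between two lists with total cost `n` (possibly padded). -/
inductive Aligned : List α → List α → ℕ → Prop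
  | nil : Aligned [] [] 0
  | matc (a : α) {x y : List α} {n : ℕ} : Aligned x y n → Aligned (a :: x) (a :: y) n
  | subst (a b : α) {x y : List α} {n : ℕ} : Aligned x y n → Aligned (a :: x) (b :: y) (n + 1)
  | del (a : α) {x y : List α} {n : ℕ} : Aligned x y n → Aligned (a :: x) y (n + 1)
  | ins (b : α) {x y : List α} {n : ℕ} : Aligned x y n → Aligned x (b :: y) (n + 1)
  | pad {x y : List α} {n : ℕ} : Aligned x y n → Aligned x y (n + 1)

theorem Aligned.cast {x y : List α} {n n' : ℕ} (h : Aligned x y n) (e : n = n') :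
    Aligned x y n' := e ▸ h

theorem aligned_refl (x : List α) : Aligned x x 0 := by
  induction x with
  | nil => exact .nil
  | cons a xs ih => exact .matc a ih

theorem aligned_nil_left (y : List α) : Aligned [] y y.length := by
  induction y with
  | nil => exact .nil
  | cons b ys ih => exact .ins b ih

theorem aligned_nil_right (x : List α) : Aligned x [] x.length := by
  induction x with
  | nil => exact .nil
  | cons a xs ih => exact .del a ih

theorem aligned_append {x1 y1 x2 y2 : List α} {m n : ℕ}
    (h1 : Aligned x1 y1 m) (h2 : Aligned x2 y2 n) :
    Aligned (x1 ++ x2) (y1 ++ y2) (m + n) := by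
  induction h1 with
  | nil => simpa using h2
  | matc a h ih => simpa using Aligned.matc a ih
  | subst a b h ih => simpa [Nat.succ_add] using Aligned.subst a b ih
  | del a h ih => simpa [Nat.succ_add] using Aligned.del a ih
  | ins b h ih => simpa [Nat.succ_add] using Aligned.ins b ih
  | pad h ih => simpa [Nat.succ_add] using Aligned.pad ih

theorem aligned_trans_aux (N : ℕ) : ∀ {x y z : List α} {m n : ℕ},
    x.length + y.length + z.length + m + n ≤ N →
    Aligned x y m → Aligned y z n → Aligned x z (m + n) := by
  induction N using Nat.strong_induction_on with
  | _ N IH =>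
    intro x y z m n hN h1 h2
    have key : ∀ {x' y' z' : List α} {m' n' : ℕ},
        x'.length + y'.length + z'.length + m' + n' < N →
        Aligned x' y' m' → Aligned y' z' n' → Aligned x' z' (m' + n') :=
      fun hlt ha hb => IH _ hlt le_rfl ha hb
    cases h1 with
    | nil => simpa using h2
    | del a h1' =>
      simp only [List.length_cons] at hN
      exact (Aligned.del a (key (by (try simp only [List.length_cons] at hN ⊢); omega) h1' h2)).cast (by omega)
    | pad h1' =>
      exact (Aligned.pad (key (by (try simp only [List.length_cons] at hN ⊢); omega) h1' h2)).cast (by omega)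
    | matc a h1' =>
      simp only [List.length_cons] at hN
      cases h2 with
      | matc _ h2' =>
        exact Aligned.matc a (key (by (try simp only [List.length_cons] at hN ⊢); omega) h1' h2')
      | subst _ c h2' =>
        exact (Aligned.subst a c (key (by (try simp only [List.length_cons] at hN ⊢); omega) h1' h2')).cast (by omega)
      | del _ h2' =>
        exact (Aligned.del a (key (by (try simp only [List.length_cons] at hN ⊢); omega) h1' h2')).cast (by omega)
      | ins c h2' =>
        exact (Aligned.ins c (key (by (try simp only [List.length_cons] at hN ⊢); omega) (Aligned.matc a h1') h2')).cast (by omega)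
      | pad h2' =>
        exact (Aligned.pad (key (by (try simp only [List.length_cons] at hN ⊢); omega) (Aligned.matc a h1') h2')).cast (by omega)
    | subst a b h1' =>
      simp only [List.length_cons] at hN
      cases h2 with
      | matc _ h2' =>
        exact (Aligned.subst a b (key (by (try simp only [List.length_cons] at hN ⊢); omega) h1' h2')).cast (by omega)
      | subst _ c h2' =>
        exact (Aligned.pad (Aligned.subst a c (key (by (try simp only [List.length_cons] at hN ⊢); omega) h1' h2'))).cast (by omega)
      | del _ h2' =>
        exact (Aligned.pad (Aligned.del a (key (by (try simp only [List.length_cons] at hN ⊢); omega) h1' h2'))).cast (by omega)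
      | ins c h2' =>
        exact (Aligned.ins c (key (by (try simp only [List.length_cons] at hN ⊢); omega) (Aligned.subst a b h1') h2')).cast (by omega)
      | pad h2' =>
        exact (Aligned.pad (key (by (try simp only [List.length_cons] at hN ⊢); omega) (Aligned.subst a b h1') h2')).cast (by omega)
    | ins b h1' =>
      simp only [List.length_cons] at hN
      cases h2 with
      | matc _ h2' =>
        exact (Aligned.ins b (key (by (try simp only [List.length_cons] at hN ⊢); omega) h1' h2')).cast (by omega)
      | subst _ c h2' =>
        exact (Aligned.pad (Aligned.ins c (key (by (try simp only [List.length_cons] at hN ⊢); omega) h1' h2'))).cast (by omega)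
      | del _ h2' =>
        exact (Aligned.pad (Aligned.pad (key (by (try simp only [List.length_cons] at hN ⊢); omega) h1' h2'))).cast (by omega)
      | ins c h2' =>
        exact (Aligned.ins c (key (by (try simp only [List.length_cons] at hN ⊢); omega) (Aligned.ins b h1') h2')).cast (by omega)
      | pad h2' =>
        exact (Aligned.pad (key (by (try simp only [List.length_cons] at hN ⊢); omega) (Aligned.ins b h1') h2')).cast (by omega)

theorem aligned_trans {x y z : List α} {m n : ℕ}
    (h1 : Aligned x y m) (h2 : Aligned y z n) : Aligned x z (m + n) :=
  aligned_trans_aux (x.length + y.length + z.length + m + n) le_rfl h1 h2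

end AlignedDef

section EDLemmas

variable {α : Type*} [DecidableEq α]

theorem ED_nil_nil : ED ([] : List α) [] = 0 := by simp [ED, levenshtein]

theorem ED_nil_cons (b : α) (y : List α) : ED [] (b :: y) = 1 + ED [] y := by
  simp [ED, levenshtein, Levenshtein.defaultCost]

theorem ED_cons_nil (a : α) (x : List α) : ED (a :: x) [] = 1 + ED x [] := by
  simp [ED, levenshtein, Levenshtein.defaultCost]

theorem ED_cons_cons (a b : α) (x y : List α) :
    ED (a :: x) (b :: y) =
      min (1 + ED x (b :: y)) (min (1 + ED (a :: x) y) ((if a = b then 0 else 1) + ED x y)) := by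
  simp [ED, levenshtein, Levenshtein.defaultCost]

theorem ED_le_del (a : α) (x y : List α) : ED (a :: x) y ≤ 1 + ED x y := by
  cases y with
  | nil => rw [ED_cons_nil]
  | cons b ys => rw [ED_cons_cons]; exact min_le_left _ _

theorem ED_le_ins (b : α) (x y : List α) : ED x (b :: y) ≤ 1 + ED x y := by
  cases x with
  | nil => rw [ED_nil_cons]
  | cons a xs => rw [ED_cons_cons]; exact (min_le_right _ _).trans (min_le_left _ _)

theorem ED_le_subst (a b : α) (x y : List α) :
    ED (a :: x) (b :: y) ≤ (if a = b then 0 else 1) + ED x y := by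
  rw [ED_cons_cons]; exact (min_le_right _ _).trans (min_le_right _ _)

theorem ED_le_of_aligned {x y : List α} {n : ℕ} (h : Aligned x y n) : ED x y ≤ n := by
  induction h with
  | nil => simp [ED_nil_nil]
  | matc a h ih =>
    refine (ED_le_subst a a _ _).trans ?_
    simpa using ih
  | subst a b h ih =>
    refine (ED_le_subst a b _ _).trans ?_
    split <;> omega
  | del a h ih => exact (ED_le_del a _ _).trans (by omega)
  | ins b h ih => exact (ED_le_ins b _ _).trans (by omega)
  | pad h ih => omega

theorem aligned_ED (x : List α) : ∀ y : List α, Aligned x y (ED x y) := by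
  induction x with
  | nil =>
    intro y
    induction y with
    | nil => rw [ED_nil_nil]; exact .nil
    | cons b ys ih => rw [ED_nil_cons]; exact (Aligned.ins b ih).cast (by omega)
  | cons a xs ihx =>
    intro y
    induction y with
    | nil => rw [ED_cons_nil]; exact (Aligned.del a (ihx [])).cast (by omega)
    | cons b ys ihy =>
      rw [ED_cons_cons]
      have h1 : Aligned (a :: xs) (b :: ys) (1 + ED xs (b :: ys)) :=
        (Aligned.del a (ihx (b :: ys))).cast (by omega)
      have h2 : Aligned (a :: xs) (b :: ys) (1 + ED (a :: xs) ys) :=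
        (Aligned.ins b ihy).cast (by omega)
      have h3 : Aligned (a :: xs) (b :: ys) ((if a = b then 0 else 1) + ED xs ys) := by
        by_cases hab : a = b
        · subst hab; simpa using Aligned.matc a (ihx ys)
        · simp only [hab, if_false]
          exact (Aligned.subst a b (ihx ys)).cast (by omega)
      rcases min_choice (1 + ED xs (b :: ys))
          (min (1 + ED (a :: xs) ys) ((if a = b then 0 else 1) + ED xs ys)) with h | h
      · rw [h]; exact h1
      · rw [h]
        rcases min_choice (1 + ED (a :: xs) ys) ((if a = b then 0 else 1) + ED xs ys) with h' | h'
        · rw [h']; exact h2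
        · rw [h']; exact h3

theorem ED_triangle (x y z : List α) : ED x z ≤ ED x y + ED y z :=
  ED_le_of_aligned (aligned_trans (aligned_ED x y) (aligned_ED y z))

theorem ED_append (x1 x2 y1 y2 : List α) :
    ED (x1 ++ x2) (y1 ++ y2) ≤ ED x1 y1 + ED x2 y2 :=
  ED_le_of_aligned (aligned_append (aligned_ED x1 y1) (aligned_ED x2 y2))

theorem ED_self (x : List α) : ED x x = 0 :=
  Nat.le_zero.mp (ED_le_of_aligned (aligned_refl x))

theorem ED_rot₁ (a w : List α) : ED (a ++ w) (w ++ a) ≤ 2 * a.length := by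
  have h : Aligned (a ++ (w ++ [])) ([] ++ (w ++ a)) (a.length + (0 + a.length)) :=
    aligned_append (aligned_nil_right a) (aligned_append (aligned_refl w) (aligned_nil_left a))
  simpa [two_mul] using ED_le_of_aligned (by simpa using h)

theorem ED_rot₂ (a w : List α) : ED (w ++ a) (a ++ w) ≤ 2 * a.length := by
  have h : Aligned ([] ++ (w ++ a)) (a ++ (w ++ [])) (a.length + (0 + a.length)) :=
    aligned_append (aligned_nil_left a) (aligned_append (aligned_refl w) (aligned_nil_right a))
  simpa [two_mul] using ED_le_of_aligned (by simpa using h)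

theorem ED_pow (P R : List α) (d : ℕ) :
    ED (List.replicate d P).flatten (List.replicate d R).flatten ≤ d * ED P R := by
  induction d with
  | zero => simp [ED_nil_nil]
  | succ e ih =>
    rw [List.replicate_succ, List.replicate_succ, List.flatten_cons, List.flatten_cons]
    refine (ED_append _ _ _ _).trans ?_
    have : (e + 1) * ED P R = ED P R + e * ED P R := by ring
    omega

end EDLemmas

section FlattenLemmas

variable {α : Type*}

theorem length_flatten_replicate (m : ℕ) (P : List α) :
    ((List.replicate m P).flatten).length = m * P.length := by
  simp [List.length_flatten, List.map_replicate, List.sum_replicate, smul_eq_mul]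

theorem flatten_replicate_add (m₁ m₂ : ℕ) (P : List α) :
    (List.replicate (m₁ + m₂) P).flatten =
      (List.replicate m₁ P).flatten ++ (List.replicate m₂ P).flatten := by
  rw [List.replicate_add, List.flatten_append]

theorem take_flatten_replicate {p n : ℕ} {P : List α} (hP : P.length = p)
    (m₁ m₂ : ℕ) (hle : n ≤ m₁ * p) (hm : m₁ ≤ m₂) :
    ((List.replicate m₂ P).flatten).take n = ((List.replicate m₁ P).flatten).take n := by
  obtain ⟨c, rfl⟩ := Nat.exists_eq_add_of_le hm
  rw [flatten_replicate_add]
  exact List.take_append_of_le_length (by rw [length_flatten_replicate, hP]; exact hle)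

theorem flatten_rot (d : ℕ) (X Y : List α) :
    (List.replicate (d + 1) (X ++ Y)).flatten =
      X ++ (List.replicate d (Y ++ X)).flatten ++ Y := by
  induction d with
  | zero => simp
  | succ e ih =>
    rw [List.replicate_succ, List.flatten_cons, ih,
      List.replicate_succ, List.flatten_cons]
    simp [List.append_assoc]

theorem prefRep_eq {p : ℕ} (hp : 0 < p) {P : List α} (hP : P.length = p) (n : ℕ) :
    prefRep P n = (List.replicate (n / p) P).flatten ++ P.take (n % p) := by
  have hdm := Nat.div_add_mod n p
  have hmod : n % p < p := Nat.mod_lt n hp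
  have hnle : n ≤ (n / p + 1) * p := by
    have h2 : (n / p + 1) * p = p * (n / p) + p := by ring
    omega
  have e1 : ((List.replicate (n + (n / p + 1)) P).flatten).take n
      = ((List.replicate n P).flatten).take n :=
    take_flatten_replicate hP n (n + (n / p + 1)) (Nat.le_mul_of_pos_right n hp)
      (Nat.le_add_right _ _)
  have e2 : ((List.replicate (n + (n / p + 1)) P).flatten).take n
      = ((List.replicate (n / p + 1) P).flatten).take n :=
    take_flatten_replicate hP (n / p + 1) (n + (n / p + 1)) hnle (Nat.le_add_left _ _)
  have h1 : prefRep P n = ((List.replicate (n / p + 1) P).flatten).take n := by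
    rw [prefRep, ← e1, e2]
  rw [h1, List.replicate_succ', List.flatten_append]
  rw [List.take_append]
  have hlen : ((List.replicate (n / p) P).flatten).length = p * (n / p) := by
    rw [length_flatten_replicate, hP]; ring
  rw [List.take_of_length_le (by omega), hlen]
  have h3 : [P].flatten = P := by simp
  have h4 : n - p * (n / p) = n % p := by omega
  rw [h3, h4]

end FlattenLemmas

/-- Upper bound direction of the 3-approximation for periodic strings:
with `|P| = |Q| = p > 0`, `X = P^∞[0..n)`, `Y = Q^∞[0..n)`, `d = ⌊n/p⌋`, `r = n mod p`,
for every integer `s`, `ED(X,Y) ≤ d·ED(P, Q^{↻s}) + 2|s| + ED(P[0..r), Q[0..r))`. -/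
theorem ed_periodic_upper {α : Type*} [DecidableEq α] (P Q : List α) (p : ℕ) (hp : 0 < p)
    (hP : P.length = p) (hQ : Q.length = p) (n : ℕ) (hn : 0 < n) (s : ℤ) :
    ED (prefRep P n) (prefRep Q n) ≤
      (n / p) * ED P (rotZ Q s) + 2 * s.natAbs + ED (P.take (n % p)) (Q.take (n % p)) := by
  set d := n / p with hd
  set r := n % p with hr
  set R := rotZ Q s with hRdef
  set k : ℕ := ((s : ℤ) % (p : ℤ)).toNat with hk
  have hpz : (0 : ℤ) < (p : ℤ) := by exact_mod_cast hp
  have hmod_nonneg : (0 : ℤ) ≤ s % (p : ℤ) := Int.emod_nonneg s (by omega)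
  have hmod_lt : s % (p : ℤ) < (p : ℤ) := Int.emod_lt_of_pos s hpz
  have hkp : k ≤ p := by omega
  have hR : R = Q.rotate k := by rw [hRdef, rotZ, hQ]
  -- decomposition of Q and R
  set A := Q.take k with hA
  set B := Q.drop k with hB
  have hQAB : Q = A ++ B := (List.take_append_drop k Q).symm
  have hRBA : R = B ++ A := by rw [hR, List.rotate_eq_drop_append_take (by omega)]
  have hAlen : A.length = k := by rw [hA, List.length_take]; omega
  have hBlen : B.length = p - k := by rw [hB, List.length_drop]; omega
  -- the rotation cost bound
  have rotbound : ED (List.replicate d R).flatten (List.replicate d Q).flatten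
      ≤ 2 * s.natAbs := by
    cases d with
    | zero => simp [ED_nil_nil]
    | succ e =>
      by_cases hk0 : k = 0
      · have : A = [] := by rw [hA, hk0, List.take_zero]
        have hRQ : R = Q := by rw [hRBA, hQAB, this]; simp
        rw [hRQ, ED_self]
        omega
      · by_cases hs : 0 ≤ s
        · -- k ≤ |s|
          have hemod : s % (p : ℤ) = s - (p : ℤ) * (s / (p : ℤ)) := Int.emod_def s (p : ℤ)
          have hdivnn : 0 ≤ s / (p : ℤ) := Int.ediv_nonneg hs (le_of_lt hpz)
          have hprod : 0 ≤ (p : ℤ) * (s / (p : ℤ)) := mul_nonneg (le_of_lt hpz) hdivnn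
          have hks : k ≤ s.natAbs := by
            have : s % (p : ℤ) ≤ s := by omega
            omega
          -- Q^{e+1} = A ++ (M ++ B), R^{e+1} = (M ++ B) ++ A  where M = (B++A)^e
          have eQ : (List.replicate (e + 1) Q).flatten =
              A ++ ((List.replicate e (B ++ A)).flatten ++ B) := by
            rw [hQAB, flatten_rot, List.append_assoc]
          have eR : (List.replicate (e + 1) R).flatten =
              ((List.replicate e (B ++ A)).flatten ++ B) ++ A := by
            rw [hRBA, List.replicate_succ', List.flatten_append]
            simp [List.append_assoc]
          calc ED (List.replicate (e + 1) R).flatten (List.replicate (e + 1) Q).flatten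
              ≤ 2 * A.length := by rw [eQ, eR]; exact ED_rot₂ A _
            _ ≤ 2 * s.natAbs := by rw [hAlen]; omega
        · -- s < 0 : p - k ≤ |s|
          push_neg at hs
          have hemod : s % (p : ℤ) = s - (p : ℤ) * (s / (p : ℤ)) := Int.emod_def s (p : ℤ)
          have hdivneg : s / (p : ℤ) < 0 := Int.ediv_neg_of_neg_of_pos hs hpz
          have hdivle : s / (p : ℤ) ≤ -1 := by omega
          have hmul : (p : ℤ) * (s / (p : ℤ)) ≤ (p : ℤ) * (-1) :=
            mul_le_mul_of_nonneg_left hdivle (le_of_lt hpz)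
          have hkey : (p : ℤ) - s % (p : ℤ) ≤ -s := by omega
          have hks : p - k ≤ s.natAbs := by omega
          have eR : (List.replicate (e + 1) R).flatten =
              B ++ ((List.replicate e (A ++ B)).flatten ++ A) := by
            rw [hRBA, flatten_rot, List.append_assoc]
          have eQ : (List.replicate (e + 1) Q).flatten =
              ((List.replicate e (A ++ B)).flatten ++ A) ++ B := by
            rw [hQAB, List.replicate_succ', List.flatten_append]
            simp [List.append_assoc]
          calc ED (List.replicate (e + 1) R).flatten (List.replicate (e + 1) Q).flatten
              ≤ 2 * B.length := by rw [eQ, eR]; exact ED_rot₁ B _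
            _ ≤ 2 * s.natAbs := by rw [hBlen]; omega
  -- assemble
  have hX := prefRep_eq hp hP n
  have hY := prefRep_eq hp hQ n
  rw [← hd, ← hr] at hX hY
  rw [hX, hY]
  refine (ED_append _ _ _ _).trans ?_
  have powbound : ED (List.replicate d P).flatten (List.replicate d R).flatten ≤ d * ED P R :=
    ED_pow P R d
  have tri : ED (List.replicate d P).flatten (List.replicate d Q).flatten ≤
      ED (List.replicate d P).flatten (List.replicate d R).flatten +
      ED (List.replicate d R).flatten (List.replicate d Q).flatten :=
    ED_triangle _ _ _
  omega
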